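/- Let $R$ be a filtered ring with Rees ring $\widetilde R = \bigoplus_{n} (F_n R) X^n$, and for a graded $\widetilde R$-module $W$ let $\mathcal E(W) := W/(1-X)W$ be its dehomogenization, a filtered $R$-module with $F_n \mathcal E(W) = (W_n + (1-X)W)/(1-X)W$. If $N_1 \to N_2 \to N_3$ is an exact sequence of graded $\widetilde R$-modules and $N_3$ is $X$-torsion-free, then the induced sequence $\mathcal E(N_1) \to \mathcal E(N_2) \to \mathcal E(N_3)$ of filtered $R$-modules is exact and the first morphism is strict (i.e. the image of $F_n\mathcal E(N_1)$ equals the intersection of the image with $F_n \mathcal E(N_2)$ for all $n$). In particular, if $N_1 \to N_2$ is a surjection of graded $\widetilde R$-modules, then $\mathcal E(N_1) \to \mathcal E(N_2)$ is a strict surjection. -/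

import Mathlib

set_option maxHeartbeats 1000000
set_option synthInstance.maxHeartbeats 400000

noncomputable section

variable (R : Type) [Ring R] (F : ℤ → AddSubgroup R)

/-- The Rees ring `R̃ = ⊕_n (F_n R) Xⁿ` of a filtered ring `(R, F)`, realized as the
subring of the Laurent polynomial ring `R[X, X⁻¹] = AddMonoidAlgebra R ℤ` consisting
of those elements whose `n`-th coefficient lies in `F n` for every `n`. -/
def ReesSubring (hone : (1 : R) ∈ F 0)
    (hmul : ∀ {m n : ℤ} {a b : R}, a ∈ F m → b ∈ F n → a * b ∈ F (m + n)) :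
    Subring (AddMonoidAlgebra R ℤ) where
  carrier := {f | ∀ n : ℤ, f.coeff n ∈ F n}
  zero_mem' := fun n => by simpa using zero_mem (F n)
  one_mem' := fun n => by
    classical
    rw [AddMonoidAlgebra.one_def, AddMonoidAlgebra.coeff_single, Finsupp.single_apply]
    split_ifs with h
    · exact h ▸ hone
    · exact zero_mem _
  add_mem' := fun {a b} ha hb n => by
    rw [AddMonoidAlgebra.coeff_add, Finsupp.add_apply]; exact add_mem (ha n) (hb n)
  neg_mem' := fun {a} ha n => by
    rw [AddMonoidAlgebra.coeff_neg, Finsupp.neg_apply]; exact neg_mem (ha n)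
  mul_mem' := fun {a b} ha hb n => by
    classical
    rw [AddMonoidAlgebra.coeff_mul]
    refine sum_mem fun i _ => sum_mem fun j _ => ?_
    show (if i + j = n then a.coeff i * b.coeff j else 0) ∈ F n
    split_ifs with h
    · exact h ▸ hmul (ha i) (hb j)
    · exact zero_mem _

variable (hone : (1 : R) ∈ F 0)
  (hmul : ∀ {m n : ℤ} {a b : R}, a ∈ F m → b ∈ F n → a * b ∈ F (m + n))
  (hmono : Monotone F)

/-- The degree-`n` homogeneous part of the Rees ring. -/
def ReesDeg (n : ℤ) : AddSubgroup (ReesSubring R F hone hmul) where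
  carrier := {f | ∀ i : ℤ, i ≠ n → (f : AddMonoidAlgebra R ℤ).coeff i = 0}
  zero_mem' := fun i _ => by simp
  add_mem' := fun {a b} ha hb i hi => by
    show ((a : AddMonoidAlgebra R ℤ) + (b : AddMonoidAlgebra R ℤ)).coeff i = 0
    rw [AddMonoidAlgebra.coeff_add, Finsupp.add_apply, ha i hi, hb i hi, add_zero]
  neg_mem' := fun {a} ha i hi => by
    show (-(a : AddMonoidAlgebra R ℤ)).coeff i = 0
    rw [AddMonoidAlgebra.coeff_neg, Finsupp.neg_apply, ha i hi, neg_zero]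

/-- The canonical homogeneous element `X` of degree `1` of the Rees ring. -/
def XRees : ReesSubring R F hone hmul :=
  ⟨AddMonoidAlgebra.single 1 1, by
    classical
    intro n
    rw [AddMonoidAlgebra.coeff_single, Finsupp.single_apply]
    split_ifs with h
    · exact h ▸ hmono (by norm_num : (0 : ℤ) ≤ 1) hone
    · exact zero_mem _⟩

/-- `(1 - X) W ⊆ W`: the kernel of the dehomogenization `W → ℰ(W) = W/(1-X)W`. -/
def oneSubXSub (W : Type) [AddCommGroup W] [Module (ReesSubring R F hone hmul) W] :
    Submodule (ReesSubring R F hone hmul) W :=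
  Submodule.span _ {w | ∃ v : W, w = v - XRees R F hone hmul hmono • v}


section Aux

open DirectSum

variable {W : Type} [AddCommGroup W] [Module (ReesSubring R F hone hmul) W]

lemma XRees_commute (s : ReesSubring R F hone hmul) :
    XRees R F hone hmul hmono * s = s * XRees R F hone hmul hmono :=
  Subtype.ext (LaurentPolynomial.T_mul 1 (s : AddMonoidAlgebra R ℤ))

lemma smul_comm_XRees (s : ReesSubring R F hone hmul) (v : W) :
    XRees R F hone hmul hmono • s • v = s • XRees R F hone hmul hmono • v := by
  rw [smul_smul, smul_smul, XRees_commute]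

/-- The linear map `v ↦ v - X • v`. -/
def oneSubXMap (W : Type) [AddCommGroup W] [Module (ReesSubring R F hone hmul) W] :
    W →ₗ[ReesSubring R F hone hmul] W where
  toFun v := v - XRees R F hone hmul hmono • v
  map_add' a b := by rw [smul_add]; abel
  map_smul' s v := by
    simp only [RingHom.id_apply, smul_sub]
    rw [smul_comm_XRees R F hone hmul hmono]

lemma mem_oneSubXSub_iff {w : W} :
    w ∈ oneSubXSub R F hone hmul hmono W ↔
      ∃ v : W, w = v - XRees R F hone hmul hmono • v := by
  constructor
  · intro hw
    have hle : oneSubXSub R F hone hmul hmono W ≤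
        LinearMap.range (oneSubXMap R F hone hmul hmono W) := by
      rw [oneSubXSub]
      refine Submodule.span_le.mpr ?_
      rintro w ⟨v, rfl⟩
      exact ⟨v, rfl⟩
    obtain ⟨v, hv⟩ := hle hw
    exact ⟨v, hv.symm⟩
  · rintro ⟨v, rfl⟩
    exact Submodule.subset_span ⟨v, rfl⟩

lemma sub_pow_smul_mem (w : W) (k : ℕ) :
    w - XRees R F hone hmul hmono ^ k • w ∈ oneSubXSub R F hone hmul hmono W := by
  induction k with
  | zero => rw [pow_zero, one_smul, sub_self]; exact zero_mem _
  | succ k ih =>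
    have h1 : XRees R F hone hmul hmono ^ k • w
        - XRees R F hone hmul hmono ^ (k + 1) • w ∈ oneSubXSub R F hone hmul hmono W := by
      rw [pow_succ', mul_smul]
      exact Submodule.subset_span ⟨_, rfl⟩
    have h2 := add_mem ih h1
    rwa [sub_add_sub_cancel] at h2

lemma XRees_mem_deg : XRees R F hone hmul hmono ∈ ReesDeg R F hone hmul 1 := by
  intro i hi
  classical
  show (AddMonoidAlgebra.single (1 : ℤ) (1 : R)).coeff i = 0
  rw [AddMonoidAlgebra.coeff_single, Finsupp.single_apply, if_neg (fun h => hi h.symm)]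

variable (𝒲 : ℤ → AddSubgroup W)

lemma pow_xsmul_mem
    (hsmul : ∀ {m n : ℤ} {s : ReesSubring R F hone hmul} {x : W},
      s ∈ ReesDeg R F hone hmul m → x ∈ 𝒲 n → s • x ∈ 𝒲 (m + n))
    {n : ℤ} {x : W} (hx : x ∈ 𝒲 n) (k : ℕ) :
    XRees R F hone hmul hmono ^ k • x ∈ 𝒲 ((k : ℤ) + n) := by
  induction k with
  | zero => simpa using hx
  | succ k ih =>
    have hdeg : ((k + 1 : ℕ) : ℤ) + n = 1 + ((k : ℕ) + n) := by push_cast; ring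
    rw [hdeg, pow_succ', mul_smul]
    exact hsmul (XRees_mem_deg R F hone hmul hmono) ih

lemma raise_degree
    (hsmul : ∀ {m n : ℤ} {s : ReesSubring R F hone hmul} {x : W},
      s ∈ ReesDeg R F hone hmul m → x ∈ 𝒲 n → s • x ∈ 𝒲 (m + n))
    {n m : ℤ} {x : W} (hx : x ∈ 𝒲 n) (hnm : n ≤ m) :
    ∃ x' ∈ 𝒲 m, x - x' ∈ oneSubXSub R F hone hmul hmono W := by
  refine ⟨XRees R F hone hmul hmono ^ (m - n).toNat • x, ?_,
    sub_pow_smul_mem R F hone hmul hmono x _⟩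
  have h := pow_xsmul_mem R F hone hmul hmono 𝒲 hsmul hx (m - n).toNat
  rwa [show (((m - n).toNat : ℤ) + n) = m by omega] at h

lemma homogenize (hint : DirectSum.IsInternal 𝒲)
    (hsmul : ∀ {m n : ℤ} {s : ReesSubring R F hone hmul} {x : W},
      s ∈ ReesDeg R F hone hmul m → x ∈ 𝒲 n → s • x ∈ 𝒲 (m + n))
    (w : W) :
    ∃ n : ℤ, ∃ w' ∈ 𝒲 n, w - w' ∈ oneSubXSub R F hone hmul hmono W := by
  obtain ⟨d, rfl⟩ := hint.2 w
  induction d using DirectSum.induction_on with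
  | zero => exact ⟨0, 0, zero_mem _, by simp⟩
  | of i x =>
    refine ⟨i, (x : W), x.2, ?_⟩
    rw [DirectSum.coeAddMonoidHom_of, sub_self]
    exact zero_mem _
  | add d₁ d₂ ih₁ ih₂ =>
    obtain ⟨n₁, w₁, hw₁, hs₁⟩ := ih₁
    obtain ⟨n₂, w₂, hw₂, hs₂⟩ := ih₂
    obtain ⟨w₁', hw₁', hs₁'⟩ :=
      raise_degree R F hone hmul hmono 𝒲 hsmul hw₁ (le_max_left n₁ n₂)
    obtain ⟨w₂', hw₂', hs₂'⟩ :=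
      raise_degree R F hone hmul hmono 𝒲 hsmul hw₂ (le_max_right n₁ n₂)
    refine ⟨max n₁ n₂, w₁' + w₂', add_mem hw₁' hw₂', ?_⟩
    rw [map_add]
    have key : (DirectSum.coeAddMonoidHom 𝒲 d₁ + DirectSum.coeAddMonoidHom 𝒲 d₂)
        - (w₁' + w₂')
        = ((DirectSum.coeAddMonoidHom 𝒲 d₁ - w₁) + (w₁ - w₁'))
          + ((DirectSum.coeAddMonoidHom 𝒲 d₂ - w₂) + (w₂ - w₂')) := by abel
    rw [key]
    exact add_mem (add_mem hs₁ hs₁') (add_mem hs₂ hs₂')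

/-- Degree shift by `X` on the direct sum. -/
def gradedShift
    (hsmul : ∀ {m n : ℤ} {s : ReesSubring R F hone hmul} {x : W},
      s ∈ ReesDeg R F hone hmul m → x ∈ 𝒲 n → s • x ∈ 𝒲 (m + n)) :
    (DirectSum ℤ fun i => 𝒲 i) →+ DirectSum ℤ fun i => 𝒲 i :=
  DirectSum.toAddMonoid fun k =>
    (DirectSum.of (fun i => 𝒲 i) (1 + k)).comp
      (AddMonoidHom.mk'
        (fun x => ⟨XRees R F hone hmul hmono • (x : W),
          hsmul (XRees_mem_deg R F hone hmul hmono) x.2⟩)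
        (fun a b => Subtype.ext (by
          show XRees R F hone hmul hmono • ((a + b : 𝒲 k) : W) = _
          rw [AddSubgroup.coe_add, smul_add]; rfl)))

lemma gradedShift_coe
    (hsmul : ∀ {m n : ℤ} {s : ReesSubring R F hone hmul} {x : W},
      s ∈ ReesDeg R F hone hmul m → x ∈ 𝒲 n → s • x ∈ 𝒲 (m + n))
    (d : DirectSum ℤ fun i => 𝒲 i) :
    DirectSum.coeAddMonoidHom 𝒲 (gradedShift R F hone hmul hmono 𝒲 hsmul d)
      = XRees R F hone hmul hmono • DirectSum.coeAddMonoidHom 𝒲 d := by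
  have h : (DirectSum.coeAddMonoidHom 𝒲).comp (gradedShift R F hone hmul hmono 𝒲 hsmul)
      = (AddMonoidHom.mk' (fun w : W => XRees R F hone hmul hmono • w)
          (fun a b => smul_add _ a b)).comp (DirectSum.coeAddMonoidHom 𝒲) := by
    refine DirectSum.addHom_ext fun i x => ?_
    simp only [gradedShift, AddMonoidHom.coe_comp, Function.comp_apply,
      DirectSum.toAddMonoid_of, DirectSum.coeAddMonoidHom_of, AddMonoidHom.mk'_apply]
  exact DFunLike.congr_fun h d

lemma gradedShift_apply
    (hsmul : ∀ {m n : ℤ} {s : ReesSubring R F hone hmul} {x : W},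
      s ∈ ReesDeg R F hone hmul m → x ∈ 𝒲 n → s • x ∈ 𝒲 (m + n))
    (d : DirectSum ℤ fun i => 𝒲 i) (j : ℤ) :
    ((gradedShift R F hone hmul hmono 𝒲 hsmul d j : 𝒲 j) : W)
      = XRees R F hone hmul hmono • ((d (j - 1) : 𝒲 (j - 1)) : W) := by
  induction d using DirectSum.induction_on with
  | zero => simp
  | of i x =>
    have h1 : gradedShift R F hone hmul hmono 𝒲 hsmul (DirectSum.of _ i x)
        = DirectSum.of (fun i => 𝒲 i) (1 + i)
            ⟨XRees R F hone hmul hmono • (x : W),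
              hsmul (XRees_mem_deg R F hone hmul hmono) x.2⟩ :=
      DirectSum.toAddMonoid_of _ _ _
    rw [h1, DirectSum.coe_of_apply, DirectSum.coe_of_apply]
    by_cases h : i = j - 1
    · rw [if_pos (by omega : 1 + i = j), if_pos h]
    · rw [if_neg (by omega : ¬ 1 + i = j), if_neg h]
      simp
  | add a b iha ihb =>
    rw [map_add, DirectSum.add_apply, DirectSum.add_apply, AddSubgroup.coe_add,
      AddSubgroup.coe_add, iha, ihb, smul_add]

lemma homog_mem_eq_zero (hint : DirectSum.IsInternal 𝒲)
    (hsmul : ∀ {m n : ℤ} {s : ReesSubring R F hone hmul} {x : W},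
      s ∈ ReesDeg R F hone hmul m → x ∈ 𝒲 n → s • x ∈ 𝒲 (m + n))
    (htf : ∀ y : W, XRees R F hone hmul hmono • y = 0 → y = 0)
    {n : ℤ} {z : W} (hz : z ∈ 𝒲 n)
    (hmem : z ∈ oneSubXSub R F hone hmul hmono W) : z = 0 := by
  classical
  obtain ⟨v, hv⟩ := (mem_oneSubXSub_iff R F hone hmul hmono).mp hmem
  set e := AddEquiv.ofBijective (DirectSum.coeAddMonoidHom 𝒲) hint with he
  set d := e.symm v with hd
  have hved : DirectSum.coeAddMonoidHom 𝒲 d = v := e.apply_symm_apply v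
  have heq : d = DirectSum.of (fun i => 𝒲 i) n ⟨z, hz⟩
      + gradedShift R F hone hmul hmono 𝒲 hsmul d := by
    apply hint.1
    rw [map_add, hved, DirectSum.coeAddMonoidHom_of,
      gradedShift_coe R F hone hmul hmono 𝒲 hsmul, hved]
    show v = z + XRees R F hone hmul hmono • v
    rw [hv]
    abel
  have hcomp : ∀ j : ℤ, ((d j : 𝒲 j) : W)
      = (if n = j then z else 0)
        + XRees R F hone hmul hmono • ((d (j - 1) : 𝒲 (j - 1)) : W) := by
    intro j
    conv_lhs => rw [heq]
    rw [DirectSum.add_apply, AddSubgroup.coe_add, DirectSum.coe_of_apply,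
      gradedShift_apply R F hone hmul hmono 𝒲 hsmul]
    congr 1
    split_ifs <;> simp
  obtain ⟨B, hBn, hBs⟩ : ∃ B : ℤ, n < B ∧ ∀ x ∈ DFinsupp.support d, x < B := by
    refine ⟨(insert n (DFinsupp.support d)).max' ⟨n, Finset.mem_insert_self n _⟩ + 1, ?_, ?_⟩
    · have := Finset.le_max' (insert n (DFinsupp.support d)) n (Finset.mem_insert_self n _)
      omega
    · intro x hx
      have := Finset.le_max' (insert n (DFinsupp.support d)) x (Finset.mem_insert_of_mem hx)
      omega
  obtain ⟨A, hAn, hAs⟩ : ∃ A : ℤ, A < n ∧ ∀ x ∈ DFinsupp.support d, A < x := by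
    refine ⟨(insert n (DFinsupp.support d)).min' ⟨n, Finset.mem_insert_self n _⟩ - 1, ?_, ?_⟩
    · have := Finset.min'_le (insert n (DFinsupp.support d)) n (Finset.mem_insert_self n _)
      omega
    · intro x hx
      have := Finset.min'_le (insert n (DFinsupp.support d)) x (Finset.mem_insert_of_mem hx)
      omega
  have hout : ∀ j : ℤ, j ∉ DFinsupp.support d → ((d j : 𝒲 j) : W) = 0 := by
    intro j hj
    rw [DFinsupp.notMem_support_iff.mp hj]
    rfl
  have hup : ∀ k : ℕ, ∀ j : ℤ, n ≤ j → B ≤ j + (k : ℤ) → ((d j : 𝒲 j) : W) = 0 := by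
    intro k
    induction k with
    | zero =>
      intro j hj hBk
      refine hout j fun hmem' => ?_
      have := hBs j hmem'
      omega
    | succ k ih =>
      intro j hj hBk
      by_cases hcase : B ≤ j + (k : ℤ)
      · exact ih j hj hcase
      · have h1 : ((d (j + 1) : 𝒲 (j + 1)) : W) = 0 := ih (j + 1) (by omega) (by push_cast at hBk ⊢; omega)
        have h2 := hcomp (j + 1)
        rw [h1, if_neg (by omega : ¬ n = j + 1), zero_add,
          show (j + 1 - 1 : ℤ) = j by ring] at h2
        exact htf _ h2.symm
  have hlow : ∀ k : ℕ, ∀ j : ℤ, j < n → j ≤ A + (k : ℤ) → ((d j : 𝒲 j) : W) = 0 := by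
    intro k
    induction k with
    | zero =>
      intro j hj hAk
      refine hout j fun hmem' => ?_
      have := hAs j hmem'
      omega
    | succ k ih =>
      intro j hj hAk
      by_cases hcase : j ≤ A + (k : ℤ)
      · exact ih j hj hcase
      · have h1 : ((d (j - 1) : 𝒲 (j - 1)) : W) = 0 := ih (j - 1) (by omega) (by push_cast at hAk ⊢; omega)
        have h2 := hcomp j
        rw [h1, smul_zero, if_neg (by omega : ¬ n = j), add_zero] at h2
        exact h2
  have hall : ∀ j : ℤ, ((d j : 𝒲 j) : W) = 0 := by
    intro j
    rcases lt_or_ge j n with h | h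
    · exact hlow (j - A).toNat j h (by omega)
    · exact hup (B - j).toNat j h (by omega)
  have hd0 : d = 0 := by
    refine DFinsupp.ext fun j => Subtype.ext ?_
    rw [hall j]
    rfl
  have hv0 : v = 0 := by rw [← hved, hd0, map_zero]
  rw [hv, hv0, smul_zero, sub_zero]

variable {W₂ : Type} [AddCommGroup W₂] [Module (ReesSubring R F hone hmul) W₂]
variable (𝒲₂ : ℤ → AddSubgroup W₂)

/-- A graded morphism induces a map of direct sums. -/
def gradedMap (f : W →ₗ[ReesSubring R F hone hmul] W₂)
    (hf : ∀ (nn : ℤ) (x : W), x ∈ 𝒲 nn → f x ∈ 𝒲₂ nn) :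
    (DirectSum ℤ fun i => 𝒲 i) →+ DirectSum ℤ fun i => 𝒲₂ i :=
  DirectSum.toAddMonoid fun k =>
    (DirectSum.of (fun i => 𝒲₂ i) k).comp
      (AddMonoidHom.mk' (fun x => ⟨f x, hf k x x.2⟩)
        (fun a b => Subtype.ext (by
          show f ((a + b : 𝒲 k) : W) = _
          rw [AddSubgroup.coe_add, map_add]; rfl)))

lemma gradedMap_coe (f : W →ₗ[ReesSubring R F hone hmul] W₂)
    (hf : ∀ (nn : ℤ) (x : W), x ∈ 𝒲 nn → f x ∈ 𝒲₂ nn)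
    (d : DirectSum ℤ fun i => 𝒲 i) :
    DirectSum.coeAddMonoidHom 𝒲₂ (gradedMap R F hone hmul 𝒲 𝒲₂ f hf d)
      = f (DirectSum.coeAddMonoidHom 𝒲 d) := by
  have h : (DirectSum.coeAddMonoidHom 𝒲₂).comp (gradedMap R F hone hmul 𝒲 𝒲₂ f hf)
      = (f.toAddMonoidHom).comp (DirectSum.coeAddMonoidHom 𝒲) := by
    refine DirectSum.addHom_ext fun i x => ?_
    simp only [gradedMap, AddMonoidHom.coe_comp, Function.comp_apply,
      DirectSum.toAddMonoid_of, DirectSum.coeAddMonoidHom_of, AddMonoidHom.mk'_apply,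
      LinearMap.toAddMonoidHom_coe]
  exact DFunLike.congr_fun h d

lemma gradedMap_apply (f : W →ₗ[ReesSubring R F hone hmul] W₂)
    (hf : ∀ (nn : ℤ) (x : W), x ∈ 𝒲 nn → f x ∈ 𝒲₂ nn)
    (d : DirectSum ℤ fun i => 𝒲 i) (j : ℤ) :
    ((gradedMap R F hone hmul 𝒲 𝒲₂ f hf d j : 𝒲₂ j) : W₂)
      = f ((d j : 𝒲 j) : W) := by
  induction d using DirectSum.induction_on with
  | zero => simp
  | of i x =>
    have h1 : gradedMap R F hone hmul 𝒲 𝒲₂ f hf (DirectSum.of _ i x)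
        = DirectSum.of (fun i => 𝒲₂ i) i ⟨f (x : W), hf i x x.2⟩ :=
      DirectSum.toAddMonoid_of _ _ _
    rw [h1, DirectSum.coe_of_apply, DirectSum.coe_of_apply]
    by_cases h : i = j
    · rw [if_pos h, if_pos h]
    · rw [if_neg h, if_neg h]
      simp
  | add a b iha ihb =>
    rw [map_add, DirectSum.add_apply, DirectSum.add_apply, AddSubgroup.coe_add,
      AddSubgroup.coe_add, iha, ihb, map_add]

lemma exists_homog_preimage
    (hint : DirectSum.IsInternal 𝒲) (hint₂ : DirectSum.IsInternal 𝒲₂)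
    (f : W →ₗ[ReesSubring R F hone hmul] W₂)
    (hf : ∀ (nn : ℤ) (x : W), x ∈ 𝒲 nn → f x ∈ 𝒲₂ nn)
    {n : ℤ} {x : W} (hx : f x ∈ 𝒲₂ n) :
    ∃ x' ∈ 𝒲 n, f x' = f x := by
  classical
  obtain ⟨d, rfl⟩ := hint.2 x
  have hkey : gradedMap R F hone hmul 𝒲 𝒲₂ f hf d
      = DirectSum.of (fun i => 𝒲₂ i) n ⟨f (DirectSum.coeAddMonoidHom 𝒲 d), hx⟩ := by
    apply hint₂.1
    rw [gradedMap_coe R F hone hmul 𝒲 𝒲₂ f hf, DirectSum.coeAddMonoidHom_of]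
  refine ⟨((d n : 𝒲 n) : W), (d n).2, ?_⟩
  have h5 : ((gradedMap R F hone hmul 𝒲 𝒲₂ f hf d n : 𝒲₂ n) : W₂)
      = ((DirectSum.of (fun i => 𝒲₂ i) n
          ⟨f (DirectSum.coeAddMonoidHom 𝒲 d), hx⟩ n : 𝒲₂ n) : W₂) := by
    rw [hkey]
  rw [gradedMap_apply R F hone hmul 𝒲 𝒲₂ f hf, DirectSum.of_eq_same] at h5
  exact h5

end Aux

/-- Lemma A.1 of the paper: let `R` be a filtered ring, `R̃` its Rees ring, and
`N₁ → N₂ → N₃` an exact sequence of graded `R̃`-modules with `N₃` `X`-torsion-free.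
Then the induced sequence `ℰ(N₁) → ℰ(N₂) → ℰ(N₃)` of filtered `R`-modules
(`ℰ(W) = W/(1-X)W` with `F_n ℰ(W)` the image of `W_n`) is exact and the first
morphism is strict.  In particular (taking `N₃ = 0`), if `N₁ → N₂` is surjective
then `ℰ(N₁) → ℰ(N₂)` is a strict surjection.  Exactness and strictness are stated
elementwise, modulo the submodules `(1-X)Nᵢ`. -/
theorem stmt_19
    (hexh : (⨆ n : ℤ, F n) = (⊤ : AddSubgroup R))
    {N₁ N₂ N₃ : Type}
    [AddCommGroup N₁] [Module (ReesSubring R F hone hmul) N₁]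
    [AddCommGroup N₂] [Module (ReesSubring R F hone hmul) N₂]
    [AddCommGroup N₃] [Module (ReesSubring R F hone hmul) N₃]
    (𝒩₁ : ℤ → AddSubgroup N₁) (𝒩₂ : ℤ → AddSubgroup N₂) (𝒩₃ : ℤ → AddSubgroup N₃)
    (hint₁ : DirectSum.IsInternal 𝒩₁) (hint₂ : DirectSum.IsInternal 𝒩₂)
    (hint₃ : DirectSum.IsInternal 𝒩₃)
    (hsmul₁ : ∀ {m n : ℤ} {s : ReesSubring R F hone hmul} {x : N₁},
      s ∈ ReesDeg R F hone hmul m → x ∈ 𝒩₁ n → s • x ∈ 𝒩₁ (m + n))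
    (hsmul₂ : ∀ {m n : ℤ} {s : ReesSubring R F hone hmul} {x : N₂},
      s ∈ ReesDeg R F hone hmul m → x ∈ 𝒩₂ n → s • x ∈ 𝒩₂ (m + n))
    (hsmul₃ : ∀ {m n : ℤ} {s : ReesSubring R F hone hmul} {x : N₃},
      s ∈ ReesDeg R F hone hmul m → x ∈ 𝒩₃ n → s • x ∈ 𝒩₃ (m + n))
    (f : N₁ →ₗ[ReesSubring R F hone hmul] N₂)
    (g : N₂ →ₗ[ReesSubring R F hone hmul] N₃)
    (hfgr : ∀ (n : ℤ) (x : N₁), x ∈ 𝒩₁ n → f x ∈ 𝒩₂ n)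
    (hggr : ∀ (n : ℤ) (x : N₂), x ∈ 𝒩₂ n → g x ∈ 𝒩₃ n)
    (hexact : LinearMap.range f = LinearMap.ker g)
    (htf : ∀ y : N₃, XRees R F hone hmul hmono • y = 0 → y = 0) :
    -- exactness of `ℰ(N₁) → ℰ(N₂) → ℰ(N₃)` in the middle:
    (∀ y : N₂, g y ∈ oneSubXSub R F hone hmul hmono N₃ →
      ∃ x : N₁, y - f x ∈ oneSubXSub R F hone hmul hmono N₂) ∧
    -- strictness of `ℰ(N₁) → ℰ(N₂)`:
    (∀ (n : ℤ) (x₁ : N₁), ∀ y ∈ 𝒩₂ n, f x₁ - y ∈ oneSubXSub R F hone hmul hmono N₂ →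
      ∃ x' ∈ 𝒩₁ n, f x' - y ∈ oneSubXSub R F hone hmul hmono N₂) ∧
    -- in particular, if `f` is surjective then `ℰ(f)` is a (strict) surjection:
    (Function.Surjective f →
      ∀ y : N₂, ∃ x : N₁, y - f x ∈ oneSubXSub R F hone hmul hmono N₂) := by
  classical
  have hgS : ∀ w : N₂, w ∈ oneSubXSub R F hone hmul hmono N₂ →
      g w ∈ oneSubXSub R F hone hmul hmono N₃ := by
    intro w hw
    obtain ⟨v, rfl⟩ := (mem_oneSubXSub_iff R F hone hmul hmono).mp hw
    rw [map_sub, map_smul]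
    exact (mem_oneSubXSub_iff R F hone hmul hmono).mpr ⟨g v, rfl⟩
  refine ⟨?_, ?_, ?_⟩
  · -- middle exactness
    intro y hy
    obtain ⟨n, y', hy', hyy'⟩ := homogenize R F hone hmul hmono 𝒩₂ hint₂ hsmul₂ y
    have h1 : g y' ∈ oneSubXSub R F hone hmul hmono N₃ := by
      have h2 : g (y - y') ∈ oneSubXSub R F hone hmul hmono N₃ := hgS _ hyy'
      have h3 : g y' = g y - g (y - y') := by rw [map_sub]; abel
      rw [h3]
      exact sub_mem hy h2
    have h0 : g y' = 0 :=
      homog_mem_eq_zero R F hone hmul hmono 𝒩₃ hint₃ hsmul₃ htf (hggr n y' hy') h1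
    have h4 : y' ∈ LinearMap.range f := by rw [hexact]; exact h0
    obtain ⟨x, hx⟩ := h4
    exact ⟨x, by rw [hx]; exact hyy'⟩
  · -- strictness
    intro n x₁ y hy hmem
    have h1 : g y ∈ oneSubXSub R F hone hmul hmono N₃ := by
      have h2 : g (f x₁ - y) ∈ oneSubXSub R F hone hmul hmono N₃ := hgS _ hmem
      have h3 : g (f x₁) = 0 := by
        have hk : f x₁ ∈ LinearMap.ker g := hexact ▸ LinearMap.mem_range_self f x₁
        exact hk
      rw [map_sub, h3, zero_sub] at h2
      simpa using neg_mem h2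
    have h0 : g y = 0 :=
      homog_mem_eq_zero R F hone hmul hmono 𝒩₃ hint₃ hsmul₃ htf (hggr n y hy) h1
    have h4 : y ∈ LinearMap.range f := by rw [hexact]; exact h0
    obtain ⟨x, hx⟩ := h4
    obtain ⟨x', hx'₁, hx'₂⟩ := exists_homog_preimage R F hone hmul 𝒩₁ 𝒩₂
      hint₁ hint₂ f hfgr (n := n) (x := x) (by rw [hx]; exact hy)
    refine ⟨x', hx'₁, ?_⟩
    rw [hx'₂, hx, sub_self]
    exact zero_mem _
  · -- surjectivity
    intro hsurj y
    obtain ⟨x, hx⟩ := hsurj y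
    refine ⟨x, ?_⟩
    rw [hx, sub_self]
    exact zero_mem _

end
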